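/- With (Pₙ) a uniform approximate projection on a Banach space Y and A ∈ L(Y,P), the quotient norm of A modulo P-compact operators equals the quotient norm of the adjoint A* modulo P*-compact operators on Y*: ‖A + K(Y,P)‖ = ‖A* + K(Y*,P*)‖. -/

import Mathlib

/-- `K` is `P`-compact: `‖(I - Pₙ)K‖ + ‖K(I - Pₙ)‖ → 0`. -/
def IsPCompact' {Y : Type*} [NormedAddCommGroup Y] [NormedSpace ℝ Y]
    (P : ℕ → Y →L[ℝ] Y) (K : Y →L[ℝ] Y) : Prop :=
  Filter.Tendsto (fun n => ‖K - (P n).comp K‖ + ‖K - K.comp (P n)‖)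
    Filter.atTop (nhds 0)

/-- The Banach space adjoint `A* : Y* → Y*`, `f ↦ f ∘ A`. -/
noncomputable def dualOp {Y : Type*} [NormedAddCommGroup Y] [NormedSpace ℝ Y]
    (A : Y →L[ℝ] Y) : StrongDual ℝ Y →L[ℝ] StrongDual ℝ Y :=
  (ContinuousLinearMap.compL ℝ Y Y ℝ).flip A

section Aux

open Filter ContinuousLinearMap

variable {Y : Type*} [NormedAddCommGroup Y] [NormedSpace ℝ Y]

lemma dualOp_apply (A : Y →L[ℝ] Y) (f : StrongDual ℝ Y) :
    dualOp A f = f.comp A := rfl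

lemma dualOp_comp (S T : Y →L[ℝ] Y) :
    dualOp (S.comp T) = (dualOp T).comp (dualOp S) := by
  ext f x; rfl

lemma dualOp_add (S T : Y →L[ℝ] Y) : dualOp (S + T) = dualOp S + dualOp T :=
  map_add ((ContinuousLinearMap.compL ℝ Y Y ℝ).flip) S T

lemma dualOp_sub (S T : Y →L[ℝ] Y) : dualOp (S - T) = dualOp S - dualOp T :=
  map_sub ((ContinuousLinearMap.compL ℝ Y Y ℝ).flip) S T

lemma dualOp_id : dualOp (ContinuousLinearMap.id ℝ Y) =
    ContinuousLinearMap.id ℝ (StrongDual ℝ Y) := by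
  ext f x; rfl

lemma norm_dualOp (A : Y →L[ℝ] Y) : ‖dualOp A‖ = ‖A‖ := by
  refine le_antisymm ?_ ?_
  · refine opNorm_le_bound _ (norm_nonneg A) fun f => ?_
    rw [dualOp_apply]
    calc ‖f.comp A‖ ≤ ‖f‖ * ‖A‖ := opNorm_comp_le f A
      _ = ‖A‖ * ‖f‖ := mul_comm _ _
  · refine opNorm_le_bound _ (norm_nonneg (dualOp A)) fun x => ?_
    refine NormedSpace.norm_le_dual_bound ℝ (A x) (by positivity) fun f => ?_
    have hfx : f (A x) = (dualOp A f) x := rfl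
    rw [hfx]
    calc ‖(dualOp A f) x‖ ≤ ‖dualOp A f‖ * ‖x‖ := le_opNorm _ _
      _ ≤ ‖dualOp A‖ * ‖f‖ * ‖x‖ := by gcongr; exact le_opNorm _ _
      _ = ‖dualOp A‖ * ‖x‖ * ‖f‖ := by ring

lemma isPCompact_left {P : ℕ → Y →L[ℝ] Y} {K : Y →L[ℝ] Y} (h : IsPCompact' P K) :
    Tendsto (fun n => ‖K - (P n).comp K‖) atTop (nhds 0) :=
  squeeze_zero (fun _ => norm_nonneg _)
    (fun _ => le_add_of_nonneg_right (norm_nonneg _)) h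

lemma isPCompact_right {P : ℕ → Y →L[ℝ] Y} {K : Y →L[ℝ] Y} (h : IsPCompact' P K) :
    Tendsto (fun n => ‖K - K.comp (P n)‖) atTop (nhds 0) :=
  squeeze_zero (fun _ => norm_nonneg _)
    (fun _ => le_add_of_nonneg_left (norm_nonneg _)) h

lemma isPCompact_of {P : ℕ → Y →L[ℝ] Y} {K : Y →L[ℝ] Y}
    (h1 : Tendsto (fun n => ‖K - (P n).comp K‖) atTop (nhds 0))
    (h2 : Tendsto (fun n => ‖K - K.comp (P n)‖) atTop (nhds 0)) :
    IsPCompact' P K := by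
  have := h1.add h2
  simpa [IsPCompact'] using this

lemma IsPCompact'.add' {P : ℕ → Y →L[ℝ] Y} {K L : Y →L[ℝ] Y}
    (hK : IsPCompact' P K) (hL : IsPCompact' P L) : IsPCompact' P (K + L) := by
  have h := hK.add hL
  rw [add_zero] at h
  refine squeeze_zero (fun n => by positivity) (fun n => ?_) h
  have e1 : (K + L) - (P n).comp (K + L)
      = (K - (P n).comp K) + (L - (P n).comp L) := by
    rw [comp_add]; abel
  have e2 : (K + L) - (K + L).comp (P n)
      = (K - K.comp (P n)) + (L - L.comp (P n)) := by
    rw [add_comp]; abel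
  rw [e1, e2]
  have h1 := norm_add_le (K - (P n).comp K) (L - (P n).comp L)
  have h2 := norm_add_le (K - K.comp (P n)) (L - L.comp (P n))
  linarith

lemma IsPCompact'.neg' {P : ℕ → Y →L[ℝ] Y} {K : Y →L[ℝ] Y}
    (hK : IsPCompact' P K) : IsPCompact' P (-K) := by
  have e : ∀ n, ‖(-K) - (P n).comp (-K)‖ + ‖(-K) - (-K).comp (P n)‖
      = ‖K - (P n).comp K‖ + ‖K - K.comp (P n)‖ := by
    intro n
    rw [comp_neg, neg_comp, neg_sub_neg, neg_sub_neg,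
      norm_sub_rev ((P n).comp K) K, norm_sub_rev (K.comp (P n)) K]
  unfold IsPCompact' at *
  simp only [e]
  exact hK

lemma isPCompact_zero (P : ℕ → Y →L[ℝ] Y) : IsPCompact' P (0 : Y →L[ℝ] Y) := by
  unfold IsPCompact'
  simp only [ContinuousLinearMap.comp_zero, ContinuousLinearMap.zero_comp, sub_zero,
    norm_zero, add_zero]
  exact tendsto_const_nhds

lemma isPCompact_dualOp {P : ℕ → Y →L[ℝ] Y} {K : Y →L[ℝ] Y}
    (h : IsPCompact' P K) : IsPCompact' (fun n => dualOp (P n)) (dualOp K) := by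
  have e : ∀ n, ‖dualOp K - (dualOp (P n)).comp (dualOp K)‖
        + ‖dualOp K - (dualOp K).comp (dualOp (P n))‖
      = ‖K - K.comp (P n)‖ + ‖K - (P n).comp K‖ := by
    intro n
    rw [← dualOp_comp (P n) K, ← dualOp_comp K (P n), ← dualOp_sub, ← dualOp_sub,
      norm_dualOp, norm_dualOp]
  unfold IsPCompact'
  simp only []
  simp only [e]
  have := (isPCompact_right h).add (isPCompact_left h)
  simpa using this

lemma P_comp_of_le {P : ℕ → Y →L[ℝ] Y}
    (hproj : ∀ n, (P n).comp (P (n + 1)) = P n ∧ (P (n + 1)).comp (P n) = P n)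
    (hidem : ∀ n, (P n).comp (P n) = P n) :
    ∀ n m, n ≤ m → (P m).comp (P n) = P n ∧ (P n).comp (P m) = P n := by
  intro n m hnm
  induction m, hnm using Nat.le_induction with
  | base => exact ⟨hidem n, hidem n⟩
  | succ m hm ih =>
    constructor
    · calc (P (m + 1)).comp (P n) = (P (m + 1)).comp ((P m).comp (P n)) := by rw [ih.1]
        _ = ((P (m + 1)).comp (P m)).comp (P n) := by rw [comp_assoc]
        _ = (P m).comp (P n) := by rw [(hproj m).2]
        _ = P n := ih.1
    · calc (P n).comp (P (m + 1)) = ((P n).comp (P m)).comp (P (m + 1)) := by rw [ih.2]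
        _ = (P n).comp ((P m).comp (P (m + 1))) := by rw [comp_assoc]
        _ = (P n).comp (P m) := by rw [(hproj m).1]
        _ = P n := ih.2

lemma isPCompact_P {P : ℕ → Y →L[ℝ] Y}
    (hproj : ∀ n, (P n).comp (P (n + 1)) = P n ∧ (P (n + 1)).comp (P n) = P n)
    (hidem : ∀ n, (P n).comp (P n) = P n) (n : ℕ) : IsPCompact' P (P n) := by
  unfold IsPCompact'
  refine Tendsto.congr' ?_ (tendsto_const_nhds : Tendsto (fun _ : ℕ => (0:ℝ)) atTop (nhds 0))
  filter_upwards [eventually_ge_atTop n] with m hm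
  have h1 := (P_comp_of_le hproj hidem n m hm).1
  have h2 := (P_comp_of_le hproj hidem n m hm).2
  rw [h1, h2]
  simp

lemma isPCompact_Pcomp {P : ℕ → Y →L[ℝ] Y}
    (hproj : ∀ n, (P n).comp (P (n + 1)) = P n ∧ (P (n + 1)).comp (P n) = P n)
    (hidem : ∀ n, (P n).comp (P n) = P n)
    (hnorm1 : ∀ n, ‖P n‖ = 1) (n : ℕ)
    {K : Y →L[ℝ] Y} (hK : IsPCompact' P K) : IsPCompact' P ((P n).comp K) := by
  refine isPCompact_of ?_ ?_
  · refine Tendsto.congr' ?_ (tendsto_const_nhds : Tendsto (fun _ : ℕ => (0:ℝ)) atTop (nhds 0))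
    filter_upwards [eventually_ge_atTop n] with m hm
    have h1 := (P_comp_of_le hproj hidem n m hm).1
    rw [← comp_assoc, h1]
    simp
  · refine squeeze_zero (fun _ => norm_nonneg _) (fun m => ?_) (isPCompact_right hK)
    have e : (P n).comp K - ((P n).comp K).comp (P m)
        = (P n).comp (K - K.comp (P m)) := by
      rw [comp_sub, comp_assoc]
    rw [e]
    calc ‖(P n).comp (K - K.comp (P m))‖ ≤ ‖P n‖ * ‖K - K.comp (P m)‖ := opNorm_comp_le _ _
      _ = ‖K - K.comp (P m)‖ := by rw [hnorm1 n, one_mul]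

end Aux

/-- For a uniform approximate projection `(Pₙ)` on `Y` and `A ∈ L(Y,P)`,
the quotient norm of `A` modulo the `P`-compact operators equals the quotient
norm of the adjoint `A*` modulo the `P*`-compact operators on `Y*`. -/
theorem quotient_norm_eq_quotient_norm_adjoint
    {Y : Type*} [NormedAddCommGroup Y] [NormedSpace ℝ Y] [CompleteSpace Y]
    (P : ℕ → Y →L[ℝ] Y) (A : Y →L[ℝ] Y)
    (hproj : ∀ n, (P n).comp (P (n + 1)) = P n ∧ (P (n + 1)).comp (P n) = P n)
    (hidem : ∀ n, (P n).comp (P n) = P n)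
    (hnorm : ∀ n, ‖P n‖ = 1 ∧ ‖ContinuousLinearMap.id ℝ Y - P n‖ = 1)
    (hA : ∀ K : Y →L[ℝ] Y, IsPCompact' P K →
      IsPCompact' P (A.comp K) ∧ IsPCompact' P (K.comp A)) :
    sInf {r : ℝ | ∃ L, IsPCompact' P L ∧ r = ‖A + L‖} =
      sInf {r : ℝ | ∃ M, IsPCompact' (fun n => dualOp (P n)) M ∧
        r = ‖dualOp A + M‖} := by
  classical
  open Filter ContinuousLinearMap in
  set s : Set ℝ := {r : ℝ | ∃ L, IsPCompact' P L ∧ r = ‖A + L‖} with hs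
  set t : Set ℝ := {r : ℝ | ∃ M, IsPCompact' (fun n => dualOp (P n)) M ∧
      r = ‖dualOp A + M‖} with ht
  have hs_ne : s.Nonempty := ⟨‖A + 0‖, 0, isPCompact_zero P, rfl⟩
  have ht_ne : t.Nonempty := ⟨‖dualOp A + 0‖, 0, isPCompact_zero _, rfl⟩
  have hs_bdd : BddBelow s := ⟨0, by rintro r ⟨L, _, rfl⟩; exact norm_nonneg _⟩
  have ht_bdd : BddBelow t := ⟨0, by rintro r ⟨M, _, rfl⟩; exact norm_nonneg (dualOp A + M)⟩
  refine le_antisymm ?_ ?_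
  · -- primal ≤ dual (hard direction)
    refine le_csInf ht_ne ?_
    rintro r ⟨M, hM, rfl⟩
    -- the compact correction Kₙ with A - Kₙ = (I - Pₙ) A (I - Pₙ)
    set Kn : ℕ → Y →L[ℝ] Y :=
      fun n => (P n).comp A + (A.comp (P n) - (P n).comp (A.comp (P n))) with hKn
    have hKn_cpt : ∀ n, IsPCompact' P (Kn n) := by
      intro n
      have hPn := isPCompact_P hproj hidem (P := P) n
      have h1 : IsPCompact' P ((P n).comp A) := (hA (P n) hPn).2
      have h2 : IsPCompact' P (A.comp (P n)) := (hA (P n) hPn).1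
      have h3 : IsPCompact' P ((P n).comp (A.comp (P n))) :=
        isPCompact_Pcomp hproj hidem (fun m => (hnorm m).1) n h2
      have h4 : IsPCompact' P (A.comp (P n) - (P n).comp (A.comp (P n))) := by
        rw [sub_eq_add_neg]
        exact h2.add' h3.neg'
      exact h1.add' h4
    have hQ : ∀ n, A + (-(Kn n)) =
        ((ContinuousLinearMap.id ℝ Y - P n).comp
          (A.comp (ContinuousLinearMap.id ℝ Y - P n))) := by
      intro n
      ext x
      simp only [hKn, ContinuousLinearMap.add_apply, ContinuousLinearMap.neg_apply,
        ContinuousLinearMap.comp_apply, ContinuousLinearMap.sub_apply,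
        ContinuousLinearMap.id_apply, map_sub]
      abel
    -- norm bound for each n
    have key : ∀ n, sInf s ≤ ‖dualOp A + M‖ + ‖M - (dualOp (P n)).comp M‖ := by
      intro n
      have mem : ‖A + (-(Kn n))‖ ∈ s := ⟨-(Kn n), (hKn_cpt n).neg', rfl⟩
      refine le_trans (csInf_le hs_bdd mem) ?_
      rw [hQ n]
      set Q := ContinuousLinearMap.id ℝ Y - P n with hQdef
      have hQn : ‖dualOp Q‖ = 1 := by rw [norm_dualOp]; exact (hnorm n).2
      -- pass to the dual
      rw [← norm_dualOp (Q.comp (A.comp Q))]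
      have e1 : dualOp (Q.comp (A.comp Q))
          = (dualOp Q).comp (((dualOp A) + M).comp (dualOp Q))
            - (dualOp Q).comp (M.comp (dualOp Q)) := by
        rw [dualOp_comp, dualOp_comp]
        ext f
        simp [ContinuousLinearMap.comp_apply, ContinuousLinearMap.sub_apply,
          ContinuousLinearMap.add_apply, map_add]
      rw [e1]
      have b1 : ‖(dualOp Q).comp (((dualOp A) + M).comp (dualOp Q))‖
          ≤ ‖dualOp A + M‖ := by
        calc ‖(dualOp Q).comp (((dualOp A) + M).comp (dualOp Q))‖
            ≤ ‖dualOp Q‖ * ‖((dualOp A) + M).comp (dualOp Q)‖ := opNorm_comp_le _ _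
          _ ≤ ‖dualOp Q‖ * (‖dualOp A + M‖ * ‖dualOp Q‖) := by
              gcongr; exact opNorm_comp_le _ _
          _ = ‖dualOp A + M‖ := by rw [hQn]; ring
      have b2 : ‖(dualOp Q).comp (M.comp (dualOp Q))‖
          ≤ ‖M - (dualOp (P n)).comp M‖ := by
        have eQ : (dualOp Q).comp M = M - (dualOp (P n)).comp M := by
          rw [hQdef, dualOp_sub, dualOp_id, ContinuousLinearMap.sub_comp,
            ContinuousLinearMap.id_comp]
        calc ‖(dualOp Q).comp (M.comp (dualOp Q))‖
            = ‖((dualOp Q).comp M).comp (dualOp Q)‖ := by rw [ContinuousLinearMap.comp_assoc]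
          _ ≤ ‖(dualOp Q).comp M‖ * ‖dualOp Q‖ := opNorm_comp_le _ _
          _ = ‖M - (dualOp (P n)).comp M‖ := by rw [eQ, hQn, mul_one]
      calc ‖(dualOp Q).comp (((dualOp A) + M).comp (dualOp Q))
            - (dualOp Q).comp (M.comp (dualOp Q))‖
          ≤ ‖(dualOp Q).comp (((dualOp A) + M).comp (dualOp Q))‖
            + ‖(dualOp Q).comp (M.comp (dualOp Q))‖ :=
              norm_sub_le ((dualOp Q).comp (((dualOp A) + M).comp (dualOp Q)))
                ((dualOp Q).comp (M.comp (dualOp Q)))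
        _ ≤ ‖dualOp A + M‖ + ‖M - (dualOp (P n)).comp M‖ := add_le_add b1 b2
    -- take the limit n → ∞
    have hε : Filter.Tendsto (fun n => ‖M - (dualOp (P n)).comp M‖)
        Filter.atTop (nhds 0) := isPCompact_left hM
    have hlim : Filter.Tendsto
        (fun n => ‖dualOp A + M‖ + ‖M - (dualOp (P n)).comp M‖)
        Filter.atTop (nhds ‖dualOp A + M‖) := by
      have := (tendsto_const_nhds (x := ‖dualOp A + M‖) (f := Filter.atTop (α := ℕ))).add hε
      simpa using this
    exact ge_of_tendsto' hlim key
  · -- dual ≤ primal (easy: push through dualOp)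
    refine le_csInf hs_ne ?_
    rintro r ⟨L, hL, rfl⟩
    refine csInf_le ht_bdd ⟨dualOp L, isPCompact_dualOp hL, ?_⟩
    rw [← dualOp_add, norm_dualOp]
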